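/- For every δ ∈ [0, 1/2] and every f: {0,1}^n → {0,1}: 1/2 + (1/2)·NS_{1−2δ}(f) ≤ ExpBias_{2δ}(f) ≤ 1/2 + (1/2)·√(NS_{1−2δ}(f)). -/

import Mathlib

/-- Noise stability `NS_η(f) = 1 - 2 Pr[f(x) ≠ f(y)]` where `x` is uniform and `y` is
`η`-correlated with `x`: here `z` records which coordinates are flipped, each coordinate
being flipped independently with probability `(1 - η)/2`. -/
noncomputable def noiseStability {n : ℕ} (η : ℝ) (f : (Fin n → Bool) → Bool) : ℝ :=
  1 - 2 * ∑ x : Fin n → Bool, ∑ z : Fin n → Bool,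
      ((2 ^ n : ℝ))⁻¹ * (∏ i : Fin n, if z i then (1 - η) / 2 else (1 + η) / 2) *
        (if f x ≠ f (fun i => xor (x i) (z i)) then 1 else 0)

/-- The probability that a random restriction `ρ` (each coordinate independently left
free with probability `δ`, else set to `0` or `1` each with probability `(1-δ)/2`)
equals the given restriction `ρ : Fin n → Option Bool` (`none` = free). -/
noncomputable def restrictionWeight {n : ℕ} (δ : ℝ) (ρ : Fin n → Option Bool) : ℝ :=
  ∏ i : Fin n, (match ρ i with | none => δ | some _ => (1 - δ) / 2)

/-- `bias(f_ρ) = max (Pr[f_ρ = 1], Pr[f_ρ = 0])` where the probability is over a uniform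
assignment of the free coordinates of the restriction `ρ` (filling all coordinates
uniformly and overriding the fixed ones gives the same distribution). -/
noncomputable def restrictedBias {n : ℕ} (ρ : Fin n → Option Bool) (f : (Fin n → Bool) → Bool) : ℝ :=
  max (((Finset.univ.filter (fun y : Fin n → Bool =>
          f (fun i => (ρ i).getD (y i)) = true)).card : ℝ) / 2 ^ n)
      (((Finset.univ.filter (fun y : Fin n → Bool =>
          f (fun i => (ρ i).getD (y i)) = false)).card : ℝ) / 2 ^ n)

/-- `ExpBias_δ(f) = E_ρ[bias(f_ρ)]` over a random restriction `ρ` at rate `δ`. -/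
noncomputable def expBias {n : ℕ} (δ : ℝ) (f : (Fin n → Bool) → Bool) : ℝ :=
  ∑ ρ : Fin n → Option Bool, restrictionWeight δ ρ * restrictedBias ρ f

namespace NSAux
open Finset

variable {n : ℕ}

lemma sum_pair {α β : Type*} [Fintype α] [Fintype β] (h : (Fin n → α) → (Fin n → β) → ℝ) :
    ∑ x : Fin n → α, ∑ z : Fin n → β, h x z
      = ∑ s : Fin n → α × β, h (fun i => (s i).1) (fun i => (s i).2) := by
  rw [← Fintype.sum_prod_type']
  exact (Fintype.sum_equiv (Equiv.arrowProdEquivProdArrow (Fin n) (fun _ => α) (fun _ => β))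
    (fun s => h (fun i => (s i).1) (fun i => (s i).2)) (fun p => h p.1 p.2)
    (fun s => rfl)).symm

lemma master {A B : Type*} [Fintype A] [Fintype B] [DecidableEq A] [DecidableEq B]
    (ψ : A → B) (t : A → ℝ) (F : (Fin n → B) → ℝ) :
    ∑ s : Fin n → A, (∏ i, t (s i)) * F (fun i => ψ (s i))
      = ∑ g : Fin n → B, (∏ i, ∑ a ∈ univ.filter fun a => ψ a = g i, t a) * F g := by
  have h1 : ∀ g : Fin n → B,
      (∏ i, ∑ a ∈ univ.filter fun a => ψ a = g i, t a)
        = ∑ s ∈ univ.filter (fun s : Fin n → A => (fun i => ψ (s i)) = g), ∏ i, t (s i) := by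
    intro g
    rw [Finset.prod_univ_sum]
    apply Finset.sum_congr
    · ext s
      simp [Fintype.mem_piFinset, funext_iff]
    · intros; rfl
  symm
  calc ∑ g : Fin n → B, (∏ i, ∑ a ∈ univ.filter fun a => ψ a = g i, t a) * F g
      = ∑ g : Fin n → B, ∑ s ∈ univ.filter (fun s : Fin n → A => (fun i => ψ (s i)) = g),
          (∏ i, t (s i)) * F (fun i => ψ (s i)) := by
        refine Finset.sum_congr rfl fun g _ => ?_
        rw [h1, Finset.sum_mul]
        refine Finset.sum_congr rfl fun s hs => ?_
        rw [(Finset.mem_filter.mp hs).2]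
    _ = ∑ s : Fin n → A, (∏ i, t (s i)) * F (fun i => ψ (s i)) :=
        Finset.sum_fiberwise _ _ _

def cntT (ρ : Fin n → Option Bool) (f : (Fin n → Bool) → Bool) : ℕ :=
  (Finset.univ.filter (fun y : Fin n → Bool =>
      f (fun i => (ρ i).getD (y i)) = true)).card

def cntF (ρ : Fin n → Option Bool) (f : (Fin n → Bool) → Bool) : ℕ :=
  (Finset.univ.filter (fun y : Fin n → Bool =>
      f (fun i => (ρ i).getD (y i)) = false)).card

lemma cnt_add (ρ : Fin n → Option Bool) (f : (Fin n → Bool) → Bool) :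
    cntT ρ f + cntF ρ f = 2 ^ n := by
  classical
  have h := Finset.card_filter_add_card_filter_not (s := (univ : Finset (Fin n → Bool)))
    (p := fun y : Fin n → Bool => f (fun i => (ρ i).getD (y i)) = true)
  simp only [Bool.not_eq_true] at h
  simpa [cntT, cntF, Finset.card_univ, Fintype.card_fun] using h

noncomputable def qq (ρ : Fin n → Option Bool) (f : (Fin n → Bool) → Bool) : ℝ :=
  ((cntT ρ f : ℝ) - (cntF ρ f : ℝ)) / 2 ^ n

lemma qq_abs_le (ρ : Fin n → Option Bool) (f : (Fin n → Bool) → Bool) : |qq ρ f| ≤ 1 := by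
  have h : (cntT ρ f : ℝ) + (cntF ρ f : ℝ) = 2 ^ n := by exact_mod_cast cnt_add ρ f
  have hT : (0:ℝ) ≤ cntT ρ f := Nat.cast_nonneg _
  have hF : (0:ℝ) ≤ cntF ρ f := Nat.cast_nonneg _
  have hN : (0:ℝ) < 2 ^ n := by positivity
  rw [qq, abs_div, abs_of_pos hN, div_le_one hN, abs_sub_le_iff]
  constructor <;> linarith

lemma dis_eq (ρ : Fin n → Option Bool) (f : (Fin n → Bool) → Bool) :
    ∑ y : Fin n → Bool, ∑ y' : Fin n → Bool,
      (if f (fun i => (ρ i).getD (y i)) ≠ f (fun i => (ρ i).getD (y' i)) then (1:ℝ) else 0)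
    = 2 * (cntT ρ f : ℝ) * (cntF ρ f : ℝ) := by
  classical
  calc ∑ y : Fin n → Bool, ∑ y' : Fin n → Bool,
      (if f (fun i => (ρ i).getD (y i)) ≠ f (fun i => (ρ i).getD (y' i)) then (1:ℝ) else 0)
      = ∑ y : Fin n → Bool, ∑ y' : Fin n → Bool,
        ((if f (fun i => (ρ i).getD (y i)) = true then (1:ℝ) else 0) *
          (if f (fun i => (ρ i).getD (y' i)) = false then (1:ℝ) else 0) +
         (if f (fun i => (ρ i).getD (y i)) = false then (1:ℝ) else 0) *
          (if f (fun i => (ρ i).getD (y' i)) = true then (1:ℝ) else 0)) := by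
        refine Finset.sum_congr rfl fun y _ => Finset.sum_congr rfl fun y' _ => ?_
        cases hf : f (fun i => (ρ i).getD (y i)) <;>
          cases hf' : f (fun i => (ρ i).getD (y' i)) <;> simp
    _ = 2 * (cntT ρ f : ℝ) * (cntF ρ f : ℝ) := by
        simp only [Finset.sum_add_distrib, ← Finset.mul_sum, ← Finset.sum_mul,
          Finset.sum_boole]
        rw [show (cntT ρ f : ℝ) = ((Finset.univ.filter (fun y : Fin n → Bool =>
            f (fun i => (ρ i).getD (y i)) = true)).card : ℝ) from rfl,
          show (cntF ρ f : ℝ) = ((Finset.univ.filter (fun y : Fin n → Bool =>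
            f (fun i => (ρ i).getD (y i)) = false)).card : ℝ) from rfl]
        ring

noncomputable def mm (δ : ℝ) : Option Bool → ℝ :=
  fun o => match o with | none => δ | some _ => (1 - δ) / 2

lemma rW_eq (δ : ℝ) (ρ : Fin n → Option Bool) :
    restrictionWeight δ ρ = ∏ i, mm δ (ρ i) := rfl

lemma wsum (δ : ℝ) :
    ∑ ρ : Fin n → Option Bool, restrictionWeight δ ρ = 1 := by
  classical
  have hm : ∑ o ∈ (univ : Finset (Option Bool)), mm δ o = 1 := by
    rw [Fintype.sum_option]
    simp [mm]
    ring
  calc ∑ ρ : Fin n → Option Bool, restrictionWeight δ ρ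
      = ∑ ρ ∈ Fintype.piFinset (fun _ : Fin n => (univ : Finset (Option Bool))),
          ∏ i, mm δ (ρ i) := by
        rw [Fintype.piFinset_univ]
        exact Finset.sum_congr rfl fun ρ _ => rW_eq δ ρ
    _ = ∏ _i : Fin n, ∑ o ∈ (univ : Finset (Option Bool)), mm δ o :=
        (Finset.prod_univ_sum _ _).symm
    _ = 1 := by rw [Finset.prod_congr rfl fun i _ => hm, Finset.prod_const_one]

lemma wnn {δ : ℝ} (h0 : 0 ≤ δ) (h1 : δ ≤ 1 / 2) (ρ : Fin n → Option Bool) :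
    0 ≤ restrictionWeight (2 * δ) ρ := by
  apply Finset.prod_nonneg
  intro i _
  cases ρ i <;> simp <;> linarith

def psi1 : Bool × Bool → Bool × Bool := fun p => (p.1, xor p.1 p.2)

noncomputable def tt1 (δ : ℝ) : Bool × Bool → ℝ :=
  fun p => (1 / 2) * (if p.2 then δ else 1 - δ)

def psi2 : Option Bool × Bool × Bool → Bool × Bool :=
  fun p => ((p.1).getD p.2.1, (p.1).getD p.2.2)

noncomputable def tt2 (δ : ℝ) : Option Bool × Bool × Bool → ℝ :=
  fun p => (1 / 4) * mm (2 * δ) p.1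

noncomputable def FF (f : (Fin n → Bool) → Bool) : (Fin n → Bool × Bool) → ℝ :=
  fun g => if f (fun i => (g i).1) ≠ f (fun i => (g i).2) then 1 else 0

lemma fiber_eq (δ : ℝ) (b : Bool × Bool) :
    ∑ a ∈ univ.filter (fun a => psi1 a = b), tt1 δ a
      = ∑ a ∈ univ.filter (fun a => psi2 a = b), tt2 δ a := by
  obtain ⟨b1, b2⟩ := b
  rw [Finset.sum_filter, Finset.sum_filter]
  cases b1 <;> cases b2 <;>
    simp [psi1, psi2, tt1, tt2, mm, Fintype.sum_prod_type, Fintype.sum_option,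
      Fintype.sum_bool, Prod.ext_iff] <;> ring

lemma NS_eq (δ : ℝ) (f : (Fin n → Bool) → Bool) :
    noiseStability (1 - 2 * δ) f
      = 1 - 2 * ∑ g : Fin n → Bool × Bool,
          (∏ i, ∑ a ∈ univ.filter fun a => psi1 a = g i, tt1 δ a) * FF f g := by
  unfold noiseStability
  congr 1
  congr 1
  calc ∑ x : Fin n → Bool, ∑ z : Fin n → Bool,
        ((2 ^ n : ℝ))⁻¹ * (∏ i : Fin n, if z i then (1 - (1 - 2 * δ)) / 2 else (1 + (1 - 2 * δ)) / 2) *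
          (if f x ≠ f (fun i => xor (x i) (z i)) then 1 else 0)
      = ∑ x : Fin n → Bool, ∑ z : Fin n → Bool,
          (∏ i, tt1 δ (x i, z i)) * FF f (fun i => psi1 (x i, z i)) := by
        refine Finset.sum_congr rfl fun x _ => Finset.sum_congr rfl fun z _ => ?_
        have h1 : ((2 ^ n : ℝ))⁻¹ *
            (∏ i : Fin n, if z i then (1 - (1 - 2 * δ)) / 2 else (1 + (1 - 2 * δ)) / 2)
            = ∏ i, tt1 δ (x i, z i) := by
          have h2 : ∀ i : Fin n, tt1 δ (x i, z i) = (1 / 2) * (if z i then δ else 1 - δ) :=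
            fun i => rfl
          rw [Finset.prod_congr rfl (fun i _ => h2 i), Finset.prod_mul_distrib,
            Finset.prod_const, Finset.card_univ, Fintype.card_fin]
          congr 1
          · rw [one_div, inv_pow]
          · exact Finset.prod_congr rfl fun i _ => by cases z i <;> simp <;> ring
        rw [h1]
        rfl
    _ = ∑ s : Fin n → Bool × Bool, (∏ i, tt1 δ (s i)) * FF f (fun i => psi1 (s i)) := by
        rw [sum_pair (fun x z => (∏ i, tt1 δ (x i, z i)) * FF f (fun i => psi1 (x i, z i)))]
    _ = ∑ g : Fin n → Bool × Bool,
          (∏ i, ∑ a ∈ univ.filter fun a => psi1 a = g i, tt1 δ a) * FF f g :=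
        master psi1 (tt1 δ) (FF f)

set_option maxHeartbeats 2000000 in
lemma E_eq (δ : ℝ) (f : (Fin n → Bool) → Bool) :
    ∑ ρ : Fin n → Option Bool, restrictionWeight (2 * δ) ρ *
        (((2 ^ n : ℝ))⁻¹ * ((2 ^ n : ℝ))⁻¹ * (2 * (cntT ρ f : ℝ) * (cntF ρ f : ℝ)))
      = ∑ g : Fin n → Bool × Bool,
          (∏ i, ∑ a ∈ univ.filter fun a => psi2 a = g i, tt2 δ a) * FF f g := by
  calc ∑ ρ : Fin n → Option Bool, restrictionWeight (2 * δ) ρ *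
        (((2 ^ n : ℝ))⁻¹ * ((2 ^ n : ℝ))⁻¹ * (2 * (cntT ρ f : ℝ) * (cntF ρ f : ℝ)))
      = ∑ ρ : Fin n → Option Bool, ∑ y : Fin n → Bool, ∑ y' : Fin n → Bool,
          (∏ i, tt2 δ (ρ i, y i, y' i)) * FF f (fun i => psi2 (ρ i, y i, y' i)) := by
        refine Finset.sum_congr rfl fun ρ _ => ?_
        rw [← dis_eq ρ f, ← mul_assoc, Finset.mul_sum]
        refine Finset.sum_congr rfl fun y _ => ?_
        rw [Finset.mul_sum]
        refine Finset.sum_congr rfl fun y' _ => ?_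
        have hc : restrictionWeight (2 * δ) ρ * (((2 ^ n : ℝ))⁻¹ * ((2 ^ n : ℝ))⁻¹)
            = ∏ i, tt2 δ (ρ i, y i, y' i) := by
          have h2 : ∀ i : Fin n, tt2 δ (ρ i, y i, y' i) = (1 / 4) * mm (2 * δ) (ρ i) :=
            fun i => rfl
          rw [Finset.prod_congr rfl (fun i _ => h2 i), Finset.prod_mul_distrib,
            Finset.prod_const, Finset.card_univ, Fintype.card_fin, rW_eq]
          rw [show ((1:ℝ)/4)^n = ((2 ^ n : ℝ))⁻¹ * ((2 ^ n : ℝ))⁻¹ by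
            rw [← mul_inv, ← mul_pow, ← inv_pow]; norm_num]
          ring
        rw [hc]
        rfl
    _ = ∑ ρ : Fin n → Option Bool, ∑ p : Fin n → Bool × Bool,
          (∏ i, tt2 δ (ρ i, (p i).1, (p i).2)) * FF f (fun i => psi2 (ρ i, (p i).1, (p i).2)) := by
        refine Finset.sum_congr rfl fun ρ _ => ?_
        exact sum_pair (fun y y' => (∏ i, tt2 δ (ρ i, y i, y' i)) *
          FF f (fun i => psi2 (ρ i, y i, y' i)))
    _ = ∑ s : Fin n → Option Bool × Bool × Bool,
          (∏ i, tt2 δ (s i)) * FF f (fun i => psi2 (s i)) := by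
        exact sum_pair (fun (ρ : Fin n → Option Bool) (p : Fin n → Bool × Bool) =>
          (∏ i, tt2 δ (ρ i, (p i).1, (p i).2)) *
            FF f (fun i => psi2 (ρ i, (p i).1, (p i).2)))
    _ = ∑ g : Fin n → Bool × Bool,
          (∏ i, ∑ a ∈ univ.filter fun a => psi2 a = g i, tt2 δ a) * FF f g :=
        master psi2 (tt2 δ) (FF f)


lemma bias_eq (ρ : Fin n → Option Bool) (f : (Fin n → Bool) → Bool) :
    restrictedBias ρ f = 1 / 2 + |qq ρ f| / 2 := by
  have h : (cntT ρ f : ℝ) + (cntF ρ f : ℝ) = 2 ^ n := by exact_mod_cast cnt_add ρ f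
  have hN : (0:ℝ) < 2 ^ n := by positivity
  rw [restrictedBias, show ((Finset.univ.filter (fun y : Fin n → Bool =>
        f (fun i => (ρ i).getD (y i)) = true)).card : ℝ) = (cntT ρ f : ℝ) from rfl,
      show ((Finset.univ.filter (fun y : Fin n → Bool =>
        f (fun i => (ρ i).getD (y i)) = false)).card : ℝ) = (cntF ρ f : ℝ) from rfl, qq]
  rcases le_total ((cntT ρ f : ℝ)) ((cntF ρ f : ℝ)) with hle | hle
  · rw [max_eq_right (by gcongr), abs_of_nonpos
      (div_nonpos_of_nonpos_of_nonneg (by linarith) (le_of_lt hN))]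
    field_simp
    rw [← h]; ring
  · rw [max_eq_left (by gcongr), abs_of_nonneg
      (div_nonneg (by linarith) (le_of_lt hN))]
    field_simp
    rw [← h]; ring

lemma NS_q (δ : ℝ) (f : (Fin n → Bool) → Bool) :
    noiseStability (1 - 2 * δ) f
      = ∑ ρ : Fin n → Option Bool, restrictionWeight (2 * δ) ρ * (qq ρ f) ^ 2 := by
  have hfib : (∑ g : Fin n → Bool × Bool,
        (∏ i, ∑ a ∈ univ.filter fun a => psi1 a = g i, tt1 δ a) * FF f g)
      = ∑ g : Fin n → Bool × Bool,
        (∏ i, ∑ a ∈ univ.filter fun a => psi2 a = g i, tt2 δ a) * FF f g :=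
    Finset.sum_congr rfl fun g _ => by
      rw [Finset.prod_congr rfl fun i _ => fiber_eq δ (g i)]
  have hN : ((2:ℝ) ^ n) ≠ 0 := by positivity
  calc noiseStability (1 - 2 * δ) f
      = 1 - 2 * ∑ ρ : Fin n → Option Bool, restrictionWeight (2 * δ) ρ *
          (((2 ^ n : ℝ))⁻¹ * ((2 ^ n : ℝ))⁻¹ * (2 * (cntT ρ f : ℝ) * (cntF ρ f : ℝ))) := by
        rw [NS_eq, hfib, ← E_eq]
    _ = (∑ ρ : Fin n → Option Bool, restrictionWeight (2 * δ) ρ)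
        - ∑ ρ : Fin n → Option Bool, 2 * (restrictionWeight (2 * δ) ρ *
          (((2 ^ n : ℝ))⁻¹ * ((2 ^ n : ℝ))⁻¹ * (2 * (cntT ρ f : ℝ) * (cntF ρ f : ℝ)))) := by
        rw [wsum, Finset.mul_sum]
    _ = ∑ ρ : Fin n → Option Bool, (restrictionWeight (2 * δ) ρ
        - 2 * (restrictionWeight (2 * δ) ρ *
          (((2 ^ n : ℝ))⁻¹ * ((2 ^ n : ℝ))⁻¹ * (2 * (cntT ρ f : ℝ) * (cntF ρ f : ℝ))))) := by
        rw [Finset.sum_sub_distrib]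
    _ = ∑ ρ : Fin n → Option Bool, restrictionWeight (2 * δ) ρ * (qq ρ f) ^ 2 := by
        refine Finset.sum_congr rfl fun ρ _ => ?_
        have h : (cntT ρ f : ℝ) + (cntF ρ f : ℝ) = 2 ^ n := by exact_mod_cast cnt_add ρ f
        rw [qq]
        field_simp
        rw [← h]; ring

lemma EB (δ : ℝ) (f : (Fin n → Bool) → Bool) :
    expBias (2 * δ) f
      = 1 / 2 + (1 / 2) * ∑ ρ : Fin n → Option Bool,
          restrictionWeight (2 * δ) ρ * |qq ρ f| := by
  unfold expBias
  calc ∑ ρ : Fin n → Option Bool, restrictionWeight (2 * δ) ρ * restrictedBias ρ f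
      = ∑ ρ : Fin n → Option Bool, ((1 / 2) * restrictionWeight (2 * δ) ρ
          + (1 / 2) * (restrictionWeight (2 * δ) ρ * |qq ρ f|)) :=
        Finset.sum_congr rfl fun ρ _ => by rw [bias_eq]; ring
    _ = (1 / 2) * ∑ ρ : Fin n → Option Bool, restrictionWeight (2 * δ) ρ
        + (1 / 2) * ∑ ρ : Fin n → Option Bool, restrictionWeight (2 * δ) ρ * |qq ρ f| := by
        rw [Finset.sum_add_distrib, ← Finset.mul_sum, ← Finset.mul_sum]
    _ = 1 / 2 + (1 / 2) * ∑ ρ : Fin n → Option Bool,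
          restrictionWeight (2 * δ) ρ * |qq ρ f| := by
        rw [wsum]; ring

end NSAux

/-- For every `δ ∈ [0, 1/2]` and `f : {0,1}^n → {0,1}`,
`1/2 + NS_{1-2δ}(f)/2 ≤ ExpBias_{2δ}(f) ≤ 1/2 + √(NS_{1-2δ}(f))/2`. -/
theorem stmt13 {n : ℕ} (δ : ℝ) (h0 : 0 ≤ δ) (h1 : δ ≤ 1 / 2)
    (f : (Fin n → Bool) → Bool) :
    1 / 2 + (1 / 2) * noiseStability (1 - 2 * δ) f ≤ expBias (2 * δ) f ∧
    expBias (2 * δ) f ≤ 1 / 2 + (1 / 2) * Real.sqrt (noiseStability (1 - 2 * δ) f) := by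
  classical
  open NSAux Finset in
  have hw : ∀ ρ : Fin n → Option Bool, 0 ≤ restrictionWeight (2 * δ) ρ := wnn h0 h1
  rw [NS_q, EB]
  constructor
  · have key : (∑ ρ : Fin n → Option Bool, restrictionWeight (2 * δ) ρ * (qq ρ f) ^ 2)
        ≤ ∑ ρ : Fin n → Option Bool, restrictionWeight (2 * δ) ρ * |qq ρ f| := by
      refine Finset.sum_le_sum fun ρ _ => ?_
      have := qq_abs_le ρ f
      have h2 : (qq ρ f) ^ 2 ≤ |qq ρ f| := by
        nlinarith [abs_nonneg (qq ρ f), sq_abs (qq ρ f)]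
      exact mul_le_mul_of_nonneg_left h2 (hw ρ)
    linarith
  · set S1 := ∑ ρ : Fin n → Option Bool, restrictionWeight (2 * δ) ρ * |qq ρ f| with hS1
    set S2 := ∑ ρ : Fin n → Option Bool, restrictionWeight (2 * δ) ρ * (qq ρ f) ^ 2 with hS2
    have hS1nn : 0 ≤ S1 :=
      Finset.sum_nonneg fun ρ _ => mul_nonneg (hw ρ) (abs_nonneg _)
    have hS2nn : 0 ≤ S2 :=
      Finset.sum_nonneg fun ρ _ => mul_nonneg (hw ρ) (sq_nonneg _)
    have CS := Finset.sum_mul_sq_le_sq_mul_sq Finset.univ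
      (fun ρ : Fin n → Option Bool => Real.sqrt (restrictionWeight (2 * δ) ρ))
      (fun ρ : Fin n → Option Bool => Real.sqrt (restrictionWeight (2 * δ) ρ) * |qq ρ f|)
    have e1 : (∑ ρ : Fin n → Option Bool, Real.sqrt (restrictionWeight (2 * δ) ρ) *
        (Real.sqrt (restrictionWeight (2 * δ) ρ) * |qq ρ f|)) = S1 :=
      Finset.sum_congr rfl fun ρ _ => by
        rw [← mul_assoc, Real.mul_self_sqrt (hw ρ)]
    have e2 : (∑ ρ : Fin n → Option Bool, Real.sqrt (restrictionWeight (2 * δ) ρ) ^ 2) = 1 := by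
      rw [Finset.sum_congr rfl fun ρ _ => Real.sq_sqrt (hw ρ), wsum]
    have e3 : (∑ ρ : Fin n → Option Bool,
        (Real.sqrt (restrictionWeight (2 * δ) ρ) * |qq ρ f|) ^ 2) = S2 :=
      Finset.sum_congr rfl fun ρ _ => by
        rw [mul_pow, Real.sq_sqrt (hw ρ), sq_abs]
    rw [e1, e2, e3, one_mul] at CS
    have key : S1 ≤ Real.sqrt S2 := by
      rw [Real.le_sqrt hS1nn hS2nn]
      exact CS
    linarith
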